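/- Let U, m ≥ 1, let A = {a_1, …, a_m} be a set of m integers in {1, …, U}, and let B, C ⊆ {1, …, U}. Define the 2mU-dimensional 0/1 vectors v'_{A+B} := the concatenation over i = 1, …, m of the blocks 0^{a_i} ∘ v_B ∘ 0^{U−a_i}, and v'_C := the m-fold repetition of the block v_C ∘ 0^U. Then the inner product of v'_{A+B} and v'_C is at least 1 if and only if there exist a ∈ A, b ∈ B, c ∈ C with a + b = c. -/

import Mathlib

/-- Characteristic vector (over ℕ) of a set `X ⊆ {1, …, U}`:
position `i ∈ {1, …, U}` carries a `1` iff `i ∈ X`. -/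
def charVec (U : ℕ) (X : Finset ℕ) : List ℕ :=
  (List.range U).map (fun i => if i + 1 ∈ X then 1 else 0)

/-- Inner product of two 0/1 vectors given as lists of equal length. -/
def innerProd (u v : List ℕ) : ℕ := (List.zipWith (· * ·) u v).sum

lemma innerProd_append (u₁ u₂ v₁ v₂ : List ℕ) (h : u₁.length = v₁.length) :
    innerProd (u₁ ++ u₂) (v₁ ++ v₂) = innerProd u₁ v₁ + innerProd u₂ v₂ := by
  unfold innerProd
  rw [List.zipWith_append h, List.sum_append]

lemma innerProd_zero_left (n : ℕ) (v : List ℕ) :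
    innerProd (List.replicate n 0) v = 0 := by
  induction n generalizing v with
  | zero => simp [innerProd]
  | succ k ih =>
    cases v with
    | nil => simp [innerProd]
    | cons x xs =>
      simp only [List.replicate_succ, innerProd, List.zipWith_cons_cons, List.sum_cons]
      simpa [innerProd] using ih xs

lemma innerProd_zero_right (n : ℕ) (v : List ℕ) :
    innerProd v (List.replicate n 0) = 0 := by
  induction n generalizing v with
  | zero => simp [innerProd]
  | succ k ih =>
    cases v with
    | nil => simp [innerProd]
    | cons x xs =>
      simp only [List.replicate_succ, innerProd, List.zipWith_cons_cons, List.sum_cons]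
      simpa [innerProd] using ih xs

lemma innerProd_flatten {α : Type*} (l : List α) (f : α → List ℕ) (g : List ℕ)
    (hlen : ∀ x, (f x).length = g.length) :
    innerProd ((l.map f).flatten) ((List.replicate l.length g).flatten)
      = (l.map (fun x => innerProd (f x) g)).sum := by
  induction l with
  | nil => simp [innerProd]
  | cons x xs ih =>
    simp only [List.map_cons, List.length_cons, List.replicate_succ, List.flatten_cons,
      List.sum_cons]
    rw [innerProd_append _ _ _ _ (hlen x), ih]

lemma block_lemma (U aᵢ : ℕ) (ha1 : 1 ≤ aᵢ) (haU : aᵢ ≤ U) (B C : Finset ℕ)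
    (hB : B ⊆ Finset.Icc 1 U) (hC : C ⊆ Finset.Icc 1 U) :
    1 ≤ innerProd (List.replicate aᵢ 0 ++ charVec U B ++ List.replicate (U - aᵢ) 0)
        (charVec U C ++ List.replicate U 0)
      ↔ ∃ b ∈ B, ∃ c ∈ C, aᵢ + b = c := by
  set fB : ℕ → ℕ := fun i => if i + 1 ∈ B then 1 else 0 with hfB
  set fC : ℕ → ℕ := fun i => if i + 1 ∈ C then 1 else 0 with hfC
  have hsplitB : charVec U B
      = (List.range (U - aᵢ)).map fB ++ ((List.range aᵢ).map ((U - aᵢ) + ·)).map fB := by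
    rw [charVec, ← List.map_append, ← List.range_add, Nat.sub_add_cancel haU]
  have hsplitC : charVec U C
      = (List.range aᵢ).map fC ++ ((List.range (U - aᵢ)).map (aᵢ + ·)).map fC := by
    rw [charVec, ← List.map_append, ← List.range_add, Nat.add_sub_cancel' haU]
  have key : innerProd (List.replicate aᵢ 0 ++ charVec U B ++ List.replicate (U - aᵢ) 0)
        (charVec U C ++ List.replicate U 0)
      = ∑ j ∈ Finset.range (U - aᵢ), fB j * fC (aᵢ + j) := by
    rw [hsplitB, hsplitC]
    have e1 : List.replicate aᵢ (0:ℕ) ++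
        ((List.range (U - aᵢ)).map fB ++ ((List.range aᵢ).map ((U - aᵢ) + ·)).map fB) ++
        List.replicate (U - aᵢ) 0
      = (List.replicate aᵢ (0:ℕ) ++ (List.range (U - aᵢ)).map fB) ++
        (((List.range aᵢ).map ((U - aᵢ) + ·)).map fB ++ List.replicate (U - aᵢ) 0) := by
      simp [List.append_assoc]
    have e2 : (List.range aᵢ).map fC ++ ((List.range (U - aᵢ)).map (aᵢ + ·)).map fC ++
        List.replicate U 0
      = ((List.range aᵢ).map fC ++ ((List.range (U - aᵢ)).map (aᵢ + ·)).map fC) ++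
        List.replicate U 0 := by
      simp [List.append_assoc]
    rw [e1, e2]
    rw [innerProd_append _ _ _ _ (by simp [Nat.add_sub_cancel' haU]),
      innerProd_append _ _ _ _ (by simp),
      innerProd_zero_left, innerProd_zero_right, zero_add, add_zero]
    have : List.zipWith (· * ·) ((List.range (U - aᵢ)).map fB)
        (((List.range (U - aᵢ)).map (aᵢ + ·)).map fC)
      = (List.range (U - aᵢ)).map (fun j => fB j * fC (aᵢ + j)) := by
      rw [List.map_map]
      simp [List.zipWith_map]
    rw [innerProd, this]
    rfl
  rw [key]
  constructor
  · intro h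
    rw [Nat.one_le_iff_ne_zero] at h
    have hex : ∃ j ∈ Finset.range (U - aᵢ), fB j * fC (aᵢ + j) ≠ 0 := by
      by_contra hc
      push_neg at hc
      exact h (Finset.sum_eq_zero hc)
    obtain ⟨j, hj, hne⟩ := hex
    rw [Finset.mem_range] at hj
    refine ⟨j + 1, ?_, aᵢ + j + 1, ?_, by ring⟩
    · by_contra hb; simp [hfB, hb] at hne
    · by_contra hcc
      have : fC (aᵢ + j) = 0 := by simp [hfC, hcc]
      simp [this] at hne
  · rintro ⟨b, hb, c, hc, habc⟩
    have hb1 : 1 ≤ b := (Finset.mem_Icc.mp (hB hb)).1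
    have hcU : c ≤ U := (Finset.mem_Icc.mp (hC hc)).2
    set j := b - 1 with hj
    have hbj : b = j + 1 := (Nat.succ_pred_eq_of_pos hb1).symm
    have hjlt : j < U - aᵢ := by omega
    have hterm : fB j * fC (aᵢ + j) = 1 := by
      have h1 : fB j = 1 := by simp [hfB, ← hbj, hb]
      have h2 : fC (aᵢ + j) = 1 := by
        have : aᵢ + j + 1 = c := by omega
        simp [hfC, this, hc]
      rw [h1, h2]
    calc 1 = fB j * fC (aᵢ + j) := hterm.symm
      _ ≤ ∑ j ∈ Finset.range (U - aᵢ), fB j * fC (aᵢ + j) :=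
        Finset.single_le_sum (f := fun j => fB j * fC (aᵢ + j))
          (fun _ _ => Nat.zero_le _) (Finset.mem_range.mpr hjlt)

/-- with `A = {a 0, …, a (m-1)}`, `B`, `C` sets of integers in `{1, …, U}`,
the inner product of `v'_{A+B} = ⋃_i 0^{a i} v_B 0^{U - a i}` and
`v'_C = (v_C 0^U)^m` is at least 1 iff there are `a ∈ A, b ∈ B, c ∈ C` with `a + b = c`. -/
theorem stmt0 (U m : ℕ) (hU : 1 ≤ U) (hm : 1 ≤ m)
    (a : Fin m → ℕ) (ha_inj : Function.Injective a)
    (ha_mem : ∀ i, a i ∈ Finset.Icc 1 U)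
    (B C : Finset ℕ) (hB : B ⊆ Finset.Icc 1 U) (hC : C ⊆ Finset.Icc 1 U) :
    1 ≤ innerProd
        (((List.finRange m).map (fun i =>
            List.replicate (a i) 0 ++ charVec U B ++ List.replicate (U - a i) 0)).flatten)
        ((List.replicate m (charVec U C ++ List.replicate U 0)).flatten)
      ↔ ∃ i : Fin m, ∃ b ∈ B, ∃ c ∈ C, a i + b = c := by
  have hmem : ∀ i, 1 ≤ a i ∧ a i ≤ U := fun i => Finset.mem_Icc.mp (ha_mem i)
  have hlen : ∀ i : Fin m,
      (List.replicate (a i) 0 ++ charVec U B ++ List.replicate (U - a i) 0).length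
        = (charVec U C ++ List.replicate U 0).length := by
    intro i
    have := hmem i
    simp only [List.length_append, List.length_replicate, charVec, List.length_map,
      List.length_range]
    omega
  have hflat := innerProd_flatten (List.finRange m)
      (fun i => List.replicate (a i) 0 ++ charVec U B ++ List.replicate (U - a i) 0)
      (charVec U C ++ List.replicate U 0) hlen
  rw [List.length_finRange] at hflat
  rw [hflat, ← Fin.sum_univ_def]
  constructor
  · intro h
    rw [Nat.one_le_iff_ne_zero] at h
    have hex : ∃ i ∈ Finset.univ, innerProd
        (List.replicate (a i) 0 ++ charVec U B ++ List.replicate (U - a i) 0)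
        (charVec U C ++ List.replicate U 0) ≠ 0 := by
      by_contra hc
      push_neg at hc
      exact h (Finset.sum_eq_zero hc)
    obtain ⟨i, _, hne⟩ := hex
    rw [Nat.ne_zero_iff_zero_lt] at hne
    exact ⟨i, (block_lemma U (a i) (hmem i).1 (hmem i).2 B C hB hC).mp hne⟩
  · rintro ⟨i, hex⟩
    have := (block_lemma U (a i) (hmem i).1 (hmem i).2 B C hB hC).mpr hex
    calc 1 ≤ innerProd (List.replicate (a i) 0 ++ charVec U B ++ List.replicate (U - a i) 0)
          (charVec U C ++ List.replicate U 0) := this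
      _ ≤ _ := Finset.single_le_sum
          (f := fun i => innerProd
            (List.replicate (a i) 0 ++ charVec U B ++ List.replicate (U - a i) 0)
            (charVec U C ++ List.replicate U 0))
          (fun _ _ => Nat.zero_le _) (Finset.mem_univ i)
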